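/- Let A be a finite set and φ: A^ω → ℝ a continuous prefix-monotone payoff. Define ψ: A^ω → ℝ by ψ(γ) = Σ_{w ∈ A*} (1/(|A|+1))^{|w|} · φ(wγ). Then ψ is well-defined (the series converges absolutely), continuous, prefix-monotone, and shift-deterministic; moreover there exists a non-decreasing function g: ψ(A^ω) → ℝ with |g(x) − g(y)| ≤ |x − y| for all x,y ∈ ψ(A^ω) such that φ = g ∘ ψ. -/

import Mathlib

open Filter Topology

/-- Concatenation of a finite word with an infinite word. -/
def wcat {A : Type*} (u : List A) (β : ℕ → A) : ℕ → A :=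
  fun n => if h : n < u.length then u.get ⟨n, h⟩ else β (n - u.length)

/-- A payoff is prefix-monotone if there are no finite words `u, v` and infinite words
`β, γ` with `φ(uβ) > φ(uγ)` and `φ(vβ) < φ(vγ)`. -/
def PrefixMonotone {A : Type*} (φ : (ℕ → A) → ℝ) : Prop :=
  ¬ ∃ (u v : List A) (β γ : ℕ → A),
      φ (wcat u β) > φ (wcat u γ) ∧ φ (wcat v β) < φ (wcat v γ)

/-- A payoff is shift-deterministic if `φ(β) = φ(γ)` implies `φ(aβ) = φ(aγ)`. -/
def ShiftDet {A : Type*} (φ : (ℕ → A) → ℝ) : Prop :=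
  ∀ (a : A) (β γ : ℕ → A), φ β = φ γ → φ (wcat [a] β) = φ (wcat [a] γ)

lemma wcat_nil {A : Type*} (β : ℕ → A) : wcat [] β = β := by
  funext n; simp [wcat]

lemma wcat_wcat {A : Type*} (u v : List A) (β : ℕ → A) :
    wcat u (wcat v β) = wcat (u ++ v) β := by
  funext n
  simp only [wcat, List.length_append]
  by_cases h1 : n < u.length
  · rw [dif_pos h1, dif_pos (by omega)]
    simp only [List.get_eq_getElem]
    exact (List.getElem_append_left h1).symm
  · rw [dif_neg h1]
    by_cases h2 : n - u.length < v.length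
    · rw [dif_pos h2, dif_pos (by omega)]
      simp only [List.get_eq_getElem]
      exact (List.getElem_append_right (by omega)).symm
    · rw [dif_neg h2, dif_neg (by omega)]
      congr 1; omega

theorem phi_to_psi
    {A : Type*} [Fintype A] [Nonempty A] [TopologicalSpace A] [DiscreteTopology A]
    (φ : (ℕ → A) → ℝ) (hcont : Continuous φ) (hpm : PrefixMonotone φ)
    (ψ : (ℕ → A) → ℝ)
    (hψ : ∀ γ : ℕ → A,
      ψ γ = ∑' w : List A,
        (1 / ((Fintype.card A : ℝ) + 1)) ^ w.length * φ (wcat w γ)) :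
    (∀ γ : ℕ → A,
        Summable (fun w : List A =>
          (1 / ((Fintype.card A : ℝ) + 1)) ^ w.length * φ (wcat w γ))) ∧
    Continuous ψ ∧ PrefixMonotone ψ ∧ ShiftDet ψ ∧
    ∃ g : ℝ → ℝ,
      (∀ x ∈ Set.range ψ, ∀ y ∈ Set.range ψ, x ≤ y → g x ≤ g y) ∧
      (∀ x ∈ Set.range ψ, ∀ y ∈ Set.range ψ, |g x - g y| ≤ |x - y|) ∧
      (∀ γ : ℕ → A, φ γ = g (ψ γ)) := by
  set n : ℕ := Fintype.card A with hn
  set c : ℝ := 1 / ((n : ℝ) + 1) with hc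
  have hn1 : 1 ≤ n := Fintype.card_pos
  have hc0 : 0 < c := by positivity
  have hc1 : c ≤ 1 := by
    have h1 : (1:ℝ) ≤ n := by exact_mod_cast hn1
    rw [hc, div_le_one (by positivity)]; linarith
  -- bound on φ
  obtain ⟨C, hC⟩ : ∃ C, ∀ γ : ℕ → A, ‖φ γ‖ ≤ C := by
    obtain ⟨C, hC⟩ := isCompact_univ.exists_bound_of_continuousOn hcont.continuousOn
    exact ⟨C, fun γ => hC γ (Set.mem_univ _)⟩
  have hC0 : 0 ≤ C := le_trans (norm_nonneg _) (hC (Classical.arbitrary _))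
  -- summability of the dominating series
  have hFsum : Summable (fun w : List A => c ^ w.length * C) := by
    rw [← (List.equivSigmaTuple (α := A)).symm.summable_iff]
    have hrepr : ((fun w : List A => c ^ w.length * C) ∘ (List.equivSigmaTuple (α := A)).symm)
        = fun p : Σ k, Fin k → A => c ^ p.1 * C := by
      funext p
      simp [List.equivSigmaTuple, Function.comp]
    rw [hrepr]
    rw [summable_sigma_of_nonneg (fun p => by positivity)]
    constructor
    · intro k; exact Summable.of_finite
    · have : (fun k : ℕ => ∑' _ : Fin k → A, c ^ k * C)
          = fun k : ℕ => ((n : ℝ) * c) ^ k * ((n:ℝ) * C) / (n:ℝ) := by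
        funext k
        rw [tsum_eq_sum (s := Finset.univ) (fun x hx => absurd (Finset.mem_univ x) hx)]
        rw [Finset.sum_const, Finset.card_univ, Fintype.card_fun]
        have hnn : (0:ℝ) < n := by exact_mod_cast hn1
        simp [Fintype.card_fin, mul_pow, nsmul_eq_mul]
        push_cast
        field_simp
        ring
      rw [this]
      apply Summable.div_const
      apply Summable.mul_right
      apply summable_geometric_of_lt_one (by positivity)
      rw [hc]
      rw [mul_one_div, div_lt_one (by positivity)]
      linarith
  -- summability
  have hsum : ∀ γ : ℕ → A, Summable (fun w : List A => c ^ w.length * φ (wcat w γ)) := by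
    intro γ
    apply Summable.of_norm_bounded hFsum
    intro w
    rw [norm_mul, norm_pow, Real.norm_eq_abs, abs_of_pos hc0]
    exact mul_le_mul_of_nonneg_left (hC _) (by positivity)
  -- continuity of wcat
  have hwcont : ∀ w : List A, Continuous (fun γ : ℕ → A => wcat w γ) := by
    intro w
    apply continuous_pi
    intro i
    by_cases h : i < w.length
    · simpa [wcat, h] using continuous_const
    · simpa [wcat, h] using continuous_apply (i - w.length)
  -- continuity of ψ
  have hψcont : Continuous ψ := by
    have : Continuous (fun γ : ℕ → A => ∑' w : List A, c ^ w.length * φ (wcat w γ)) := by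
      apply continuous_tsum (f := fun (w : List A) (γ : ℕ → A) => c ^ w.length * φ (wcat w γ))
        (fun w => (continuous_const.mul (hcont.comp (hwcont w)))) hFsum
      intro w γ
      rw [norm_mul, norm_pow, Real.norm_eq_abs, abs_of_pos hc0]
      exact mul_le_mul_of_nonneg_left (hC _) (by positivity)
    have heq : ψ = fun γ => ∑' w : List A, c ^ w.length * φ (wcat w γ) := funext hψ
    rw [heq]; exact this
  -- dichotomy from prefix-monotonicity
  have hdich : ∀ β γ : ℕ → A,
      (∀ u, φ (wcat u β) ≤ φ (wcat u γ)) ∨ (∀ u, φ (wcat u γ) ≤ φ (wcat u β)) := by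
    intro β γ
    by_contra h
    push_neg at h
    obtain ⟨⟨u, hu⟩, ⟨v, hv⟩⟩ := h
    exact hpm ⟨u, v, β, γ, hu, hv⟩
  -- key: if all prefixes compare, then ψ compares and Lipschitz-type bound holds
  have hkey : ∀ β γ : ℕ → A, (∀ u, φ (wcat u β) ≤ φ (wcat u γ)) →
      ψ β ≤ ψ γ ∧ φ γ - φ β ≤ ψ γ - ψ β := by
    intro β γ hle
    have hD : ∀ w : List A, 0 ≤ c ^ w.length * φ (wcat w γ) - c ^ w.length * φ (wcat w β) := by
      intro w
      have := hle w
      have hp : (0:ℝ) ≤ c ^ w.length := by positivity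
      nlinarith
    have hDsum : Summable (fun w : List A =>
        c ^ w.length * φ (wcat w γ) - c ^ w.length * φ (wcat w β)) := (hsum γ).sub (hsum β)
    have hdiff : ψ γ - ψ β = ∑' w : List A,
        (c ^ w.length * φ (wcat w γ) - c ^ w.length * φ (wcat w β)) := by
      rw [hψ γ, hψ β, Summable.tsum_sub (hsum γ) (hsum β)]
    constructor
    · have : 0 ≤ ψ γ - ψ β := by
        rw [hdiff]; exact tsum_nonneg hD
      linarith
    · have h1 := Summable.le_tsum hDsum ([] : List A) (fun j _ => hD j)
      rw [← hdiff] at h1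
      simpa [wcat_nil] using h1
  -- key2: if all prefixes compare and ψ β = ψ γ then φ agrees on all prefixes
  have hkey2 : ∀ β γ : ℕ → A, (∀ u, φ (wcat u β) ≤ φ (wcat u γ)) → ψ β = ψ γ →
      ∀ u, φ (wcat u β) = φ (wcat u γ) := by
    intro β γ hle heq u
    have hD : ∀ w : List A, 0 ≤ c ^ w.length * φ (wcat w γ) - c ^ w.length * φ (wcat w β) := by
      intro w
      have := hle w
      have hp : (0:ℝ) ≤ c ^ w.length := by positivity
      nlinarith
    have hDsum : Summable (fun w : List A =>
        c ^ w.length * φ (wcat w γ) - c ^ w.length * φ (wcat w β)) := (hsum γ).sub (hsum β)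
    have hdiff : (0:ℝ) = ∑' w : List A,
        (c ^ w.length * φ (wcat w γ) - c ^ w.length * φ (wcat w β)) := by
      rw [Summable.tsum_sub (hsum γ) (hsum β), ← hψ γ, ← hψ β, heq, sub_self]
    have h1 := Summable.le_tsum hDsum u (fun j _ => hD j)
    rw [← hdiff] at h1
    have h2 := hD u
    have h3 : c ^ u.length * φ (wcat u γ) = c ^ u.length * φ (wcat u β) := by linarith
    have hc' : (c : ℝ) ^ u.length ≠ 0 := by positivity
    exact (mul_left_cancel₀ hc' h3.symm)
  -- full equality lemma
  have hfull : ∀ β γ : ℕ → A, ψ β = ψ γ → ∀ u, φ (wcat u β) = φ (wcat u γ) := by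
    intro β γ heq u
    rcases hdich β γ with h | h
    · exact hkey2 β γ h heq u
    · exact (hkey2 γ β h heq.symm u).symm
  -- monotonicity: ψ β ≤ ψ γ → φ β ≤ φ γ
  have hmono : ∀ β γ : ℕ → A, ψ β ≤ ψ γ → φ β ≤ φ γ := by
    intro β γ hle
    rcases hdich β γ with h | h
    · simpa [wcat_nil] using h []
    · have h2 := hkey γ β h
      have heq : ψ β = ψ γ := le_antisymm hle h2.1
      have := hfull β γ heq []
      simp only [wcat_nil] at this
      exact this.le
  -- Lipschitz: |φ β - φ γ| ≤ |ψ β - ψ γ|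
  have hlip : ∀ β γ : ℕ → A, |φ β - φ γ| ≤ |ψ β - ψ γ| := by
    intro β γ
    rcases hdich β γ with h | h
    · obtain ⟨h1, h2⟩ := hkey β γ h
      have h0 : φ β ≤ φ γ := by simpa [wcat_nil] using h []
      rw [abs_sub_comm, abs_of_nonneg (by linarith), abs_sub_comm, abs_of_nonneg (by linarith)]
      exact h2
    · obtain ⟨h1, h2⟩ := hkey γ β h
      have h0 : φ γ ≤ φ β := by simpa [wcat_nil] using h []
      rw [abs_of_nonneg (by linarith), abs_of_nonneg (by linarith)]
      exact h2
  refine ⟨fun γ => hsum γ, hψcont, ?_, ?_, ?_⟩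
  · -- PrefixMonotone ψ
    rintro ⟨u, v, β, γ, hu, hv⟩
    rcases hdich β γ with h | h
    · have : ψ (wcat u β) ≤ ψ (wcat u γ) := by
        refine (hkey _ _ ?_).1
        intro w
        rw [wcat_wcat, wcat_wcat]
        exact h (w ++ u)
      exact absurd hu (not_lt.mpr this)
    · have : ψ (wcat v γ) ≤ ψ (wcat v β) := by
        refine (hkey _ _ ?_).1
        intro w
        rw [wcat_wcat, wcat_wcat]
        exact h (w ++ v)
      exact absurd hv (not_lt.mpr this)
  · -- ShiftDet ψ
    intro a β γ heq
    rw [hψ (wcat [a] β), hψ (wcat [a] γ)]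
    congr 1
    funext w
    rw [wcat_wcat, wcat_wcat, hfull β γ heq (w ++ [a])]
  · -- existence of g
    classical
    refine ⟨fun x => if h : ∃ γ, ψ γ = x then φ h.choose else 0, ?_, ?_, ?_⟩
    · rintro x ⟨β, hβ⟩ y ⟨γ, hγ⟩ hxy
      simp only []
      rw [dif_pos ⟨β, hβ⟩, dif_pos ⟨γ, hγ⟩]
      apply hmono
      rw [(⟨β, hβ⟩ : ∃ δ, ψ δ = x).choose_spec, (⟨γ, hγ⟩ : ∃ δ, ψ δ = y).choose_spec]
      exact hxy
    · rintro x ⟨β, hβ⟩ y ⟨γ, hγ⟩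
      simp only []
      rw [dif_pos ⟨β, hβ⟩, dif_pos ⟨γ, hγ⟩]
      have := hlip (⟨β, hβ⟩ : ∃ δ, ψ δ = x).choose (⟨γ, hγ⟩ : ∃ δ, ψ δ = y).choose
      rwa [(⟨β, hβ⟩ : ∃ δ, ψ δ = x).choose_spec, (⟨γ, hγ⟩ : ∃ δ, ψ δ = y).choose_spec] at this
    · intro γ
      simp only []
      rw [dif_pos ⟨γ, rfl⟩]
      have hs := (⟨γ, rfl⟩ : ∃ δ, ψ δ = ψ γ).choose_spec
      have := hfull _ _ hs []
      simpa [wcat_nil] using this.symm
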